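/- The matrix y is invertible in the e×e matrices over K, and for every integer i the set y^i·Δ = {y^i·M : M ∈ Δ} is equal to the set of e×e matrices M over K such that for all indices j, k (with 0 ≤ j, k ≤ e−1), the entry M j k lies in the R-submodule of K spanned by t^m, where m = −⌊(k − j − i)/e⌋ (floor of the rational number, with k, j, i regarded as integers, and t^m the integer power of t in K). -/

import Mathlib

/-- The standard hereditary order of ramification index `e` over a DVR `R` with
uniformizer `t`, inside the `e × e` matrices over the fraction field `K`. -/
def stdHereditaryOrder (R K : Type*) [CommRing R] [Field K] [Algebra R K]
    (t : R) (e : ℕ) : Set (Matrix (Fin e) (Fin e) K) :=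
  {M | ∀ i j : Fin e,
    if (j : ℕ) < (i : ℕ) then ∃ r : R, algebraMap R K (t * r) = M i j
    else ∃ r : R, algebraMap R K r = M i j}

/-- The matrix `y`: `y i j = 1` if `j = i + 1`, `y i j = t` if `(i,j) = (e-1, 0)`,
and `0` otherwise. -/
def yMat (R K : Type*) [CommRing R] [Field K] [Algebra R K] (t : R) (e : ℕ) :
    Matrix (Fin e) (Fin e) K :=
  Matrix.of fun i j =>
    if (j : ℕ) = (i : ℕ) + 1 then 1
    else if (i : ℕ) = e - 1 ∧ (j : ℕ) = 0 then algebraMap R K t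
    else 0

section Aux

variable {R K : Type*} [CommRing R] [Field K] [Algebra R K]

/-- Multiplying by `c` shifts span membership. -/
lemma span_shift {c : K} (hc : c ≠ 0) (m : ℤ) (x : K) :
    x ∈ Submodule.span R {c ^ m} ↔ c * x ∈ Submodule.span R {c ^ (m + 1)} := by
  simp only [Submodule.mem_span_singleton, Algebra.smul_def]
  constructor
  · rintro ⟨r, rfl⟩
    exact ⟨r, by rw [zpow_add_one₀ hc]; ring⟩
  · rintro ⟨r, hr⟩
    refine ⟨r, mul_left_cancel₀ hc ?_⟩
    rw [← hr, zpow_add_one₀ hc]; ring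

lemma fdiv_sub_nat (a : ℤ) {e : ℕ} (he : 1 ≤ e) :
    Int.fdiv (a - (e : ℤ)) (e : ℤ) = Int.fdiv a (e : ℤ) - 1 := by
  have h0 : (0:ℤ) < (e : ℤ) := by exact_mod_cast he
  rw [Int.fdiv_eq_ediv_of_nonneg _ h0.le, Int.fdiv_eq_ediv_of_nonneg _ h0.le]
  have h1 := Int.add_mul_ediv_right a (-1) h0.ne'
  have h2 : a - (e:ℤ) = a + -1 * (e:ℤ) := by ring
  rw [h2, h1]; ring

/-- The target set. -/
def sSet (R K : Type*) [CommRing R] [Field K] [Algebra R K]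
    (t : R) (e : ℕ) (i : ℤ) : Set (Matrix (Fin e) (Fin e) K) :=
  {M | ∀ j k : Fin e,
    M j k ∈ Submodule.span R
      {(algebraMap R K t) ^ (-(Int.fdiv ((k : ℤ) - (j : ℤ) - i) (e : ℤ)))}}

variable (t : R) {e : ℕ}

lemma yMat_mul_apply_lt (M : Matrix (Fin e) (Fin e) K) (j k : Fin e)
    (hj : (j : ℕ) + 1 < e) :
    (yMat R K t e * M) j k = M ⟨(j : ℕ) + 1, hj⟩ k := by
  rw [Matrix.mul_apply]
  rw [Finset.sum_eq_single (⟨(j : ℕ) + 1, hj⟩ : Fin e)]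
  · simp [yMat]
  · intro b _ hb
    have hb' : (b : ℕ) ≠ (j : ℕ) + 1 := fun h => hb (Fin.ext h)
    have hj' : (j : ℕ) ≠ e - 1 := by omega
    simp [yMat, hb', hj']
  · simp

lemma yMat_mul_apply_last (M : Matrix (Fin e) (Fin e) K) (j k : Fin e)
    (hj : (j : ℕ) = e - 1) (he : 1 ≤ e) :
    (yMat R K t e * M) j k = algebraMap R K t * M ⟨0, he⟩ k := by
  rw [Matrix.mul_apply]
  rw [Finset.sum_eq_single (⟨0, he⟩ : Fin e)]
  · have h1 : ((⟨0, he⟩ : Fin e) : ℕ) ≠ (j : ℕ) + 1 := by simp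
    simp [yMat, h1, hj]
  · intro b _ hb
    have hb0 : (b : ℕ) ≠ 0 := fun h => hb (Fin.ext h)
    have hb' : (b : ℕ) ≠ (j : ℕ) + 1 := by
      have := b.isLt; omega
    simp [yMat, hb', hb0]
  · simp

end Aux

/-- `y` is invertible, and for every integer `i`, the set `y^i · Δ` equals the
set of matrices whose `(j,k)` entry lies in the `R`-submodule of `K` spanned by
`t ^ (-⌊(k - j - i)/e⌋)`. -/
theorem yMat_zpow_mul_stdHereditaryOrder (R K : Type*) [CommRing R] [IsDomain R]
    [IsDiscreteValuationRing R] [Field K] [Algebra R K] [IsFractionRing R K]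
    (t : R) (ht : Ideal.span {t} = IsLocalRing.maximalIdeal R)
    (e : ℕ) (he : 1 ≤ e) :
    IsUnit (yMat R K t e) ∧
    ∀ u : (Matrix (Fin e) (Fin e) K)ˣ, (u : Matrix (Fin e) (Fin e) K) = yMat R K t e →
      ∀ i : ℤ,
        (fun M => ((u ^ i : (Matrix (Fin e) (Fin e) K)ˣ) : Matrix (Fin e) (Fin e) K) * M) ''
            stdHereditaryOrder R K t e
          = {M : Matrix (Fin e) (Fin e) K | ∀ j k : Fin e,
              M j k ∈ Submodule.span R
                {(algebraMap R K t) ^ (-(Int.fdiv ((k : ℤ) - (j : ℤ) - i) (e : ℤ)))}} := by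
  have ht0 : t ≠ 0 := by
    intro h
    exact IsDiscreteValuationRing.not_a_field R (by rw [← ht, h]; simp)
  have hc0 : algebraMap R K t ≠ 0 := by
    rw [map_ne_zero_iff _ (IsFractionRing.injective R K)]
    exact ht0
  set c : K := algebraMap R K t with hc
  have he0 : (0 : ℤ) < (e : ℤ) := by exact_mod_cast he
  -- explicit right inverse of y
  set z : Matrix (Fin e) (Fin e) K := Matrix.of fun j k =>
    if (j : ℕ) = (k : ℕ) + 1 then 1
    else if (j : ℕ) = 0 ∧ (k : ℕ) = e - 1 then c⁻¹
    else 0 with hzdef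
  have hyz : yMat R K t e * z = 1 := by
    ext j k
    by_cases hj : (j : ℕ) + 1 < e
    · rw [yMat_mul_apply_lt t _ j k hj]
      by_cases hjk : j = k
      · subst hjk
        simp [hzdef, Matrix.one_apply]
      · have h1 : (j : ℕ) + 1 ≠ (k : ℕ) + 1 := by
          intro h; exact hjk (Fin.ext (by omega))
        simp [hzdef, Matrix.one_apply, hjk, h1, Fin.val_inj]
    · have hj' : (j : ℕ) = e - 1 := by have := j.isLt; omega
      rw [yMat_mul_apply_last t _ j k hj' he]
      by_cases hjk : (k : ℕ) = e - 1
      · have hkj : j = k := Fin.ext (by omega)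
        have h0 : ¬ ((0 : ℕ) = (k : ℕ) + 1) := by omega
        simp [hzdef, Matrix.one_apply, hjk, hkj, h0, ← hc, mul_inv_cancel₀ hc0]
      · have hkj : ¬ j = k := fun h => hjk (by rw [← h, hj'])
        have h0 : ¬ ((0 : ℕ) = (k : ℕ) + 1) := by omega
        simp [hzdef, Matrix.one_apply, hjk, hkj, h0]
  have hyUnit : IsUnit (yMat R K t e) :=
    @isUnit_of_invertible _ _ _ (invertibleOfRightInverse _ _ hyz)
  refine ⟨hyUnit, ?_⟩
  intro u hu i
  -- key lemma: multiplication by y shifts sSet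
  have key : ∀ (i : ℤ) (M : Matrix (Fin e) (Fin e) K),
      M ∈ sSet R K t e i ↔ yMat R K t e * M ∈ sSet R K t e (i + 1) := by
    intro i M
    constructor
    · intro hM j k
      by_cases hj : (j : ℕ) + 1 < e
      · rw [yMat_mul_apply_lt t M j k hj]
        have h1 := hM ⟨(j : ℕ) + 1, hj⟩ k
        have harg : (k : ℤ) - (((⟨(j : ℕ) + 1, hj⟩ : Fin e) : ℕ) : ℤ) - i
            = (k : ℤ) - (j : ℤ) - (i + 1) := by
          push_cast; ring
        rw [harg] at h1
        exact h1
      · have hj' : (j : ℕ) = e - 1 := by have := j.isLt; omega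
        rw [yMat_mul_apply_last t M j k hj' he]
        have h1 := (span_shift hc0 _ _).mp (hM ⟨0, he⟩ k)
        have harg : (k : ℤ) - (j : ℤ) - (i + 1)
            = ((k : ℤ) - (((⟨0, he⟩ : Fin e) : ℕ) : ℤ) - i) - (e : ℤ) := by
          have hA : (((⟨0, he⟩ : Fin e) : ℕ) : ℤ) = 0 := by simp
          have hB : ((j : ℕ) : ℤ) = (e : ℤ) - 1 := by omega
          rw [hA, hB]; ring
        rw [harg, fdiv_sub_nat _ he]
        rw [show -(Int.fdiv ((k : ℤ) - (((⟨0, he⟩ : Fin e) : ℕ) : ℤ) - i) (e : ℤ) - 1)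
            = -Int.fdiv ((k : ℤ) - (((⟨0, he⟩ : Fin e) : ℕ) : ℤ) - i) (e : ℤ) + 1 by ring]
        exact h1
    · intro hM j k
      by_cases hj : (j : ℕ) = 0
      · have hlt : e - 1 < e := by omega
        have h1 := hM ⟨e - 1, hlt⟩ k
        rw [yMat_mul_apply_last t M ⟨e - 1, hlt⟩ k rfl he] at h1
        have hj0 : (⟨0, he⟩ : Fin e) = j := by
          apply Fin.ext; change 0 = (j : ℕ); omega
        have hM0 : M ⟨0, he⟩ k = M j k := by rw [hj0]
        have harg : (k : ℤ) - (((⟨e - 1, hlt⟩ : Fin e) : ℕ) : ℤ) - (i + 1)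
            = ((k : ℤ) - (j : ℤ) - i) - (e : ℤ) := by
          have hA : (((⟨e - 1, hlt⟩ : Fin e) : ℕ) : ℤ) = (e : ℤ) - 1 := by
            simp; omega
          have hB : ((j : ℕ) : ℤ) = 0 := by omega
          rw [hA, hB]; ring
        rw [harg, fdiv_sub_nat _ he, hM0] at h1
        rw [span_shift hc0 (-Int.fdiv ((k : ℤ) - (j : ℤ) - i) (e : ℤ)) (M j k)]
        rw [show -Int.fdiv ((k : ℤ) - (j : ℤ) - i) (e : ℤ) + 1
            = -(Int.fdiv ((k : ℤ) - (j : ℤ) - i) (e : ℤ) - 1) by ring]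
        exact h1
      · have hjlt : ((j : ℕ) - 1) + 1 < e := by have := j.isLt; omega
        have hjm : (j : ℕ) - 1 < e := by omega
        have h1 := hM ⟨(j : ℕ) - 1, hjm⟩ k
        rw [yMat_mul_apply_lt t M ⟨(j : ℕ) - 1, hjm⟩ k hjlt] at h1
        have hMj : M ⟨(j : ℕ) - 1 + 1, hjlt⟩ k = M j k := by
          congr 1; exact Fin.ext (by show (j : ℕ) - 1 + 1 = (j : ℕ); omega)
        have harg : (k : ℤ) - (((⟨(j : ℕ) - 1, hjm⟩ : Fin e) : ℕ) : ℤ) - (i + 1)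
            = (k : ℤ) - (j : ℤ) - i := by
          have hA : (((⟨(j : ℕ) - 1, hjm⟩ : Fin e) : ℕ) : ℤ) = ((j : ℕ) : ℤ) - 1 := by
            simp; omega
          rw [hA]; ring
        rw [hMj, harg] at h1
        exact h1
  -- base case: Δ = sSet 0
  have hdiv_neg : ∀ j k : Fin e, (k : ℕ) < (j : ℕ) →
      Int.fdiv ((k : ℤ) - (j : ℤ) - 0) (e : ℤ) = -1 := by
    intro j k hkj
    rw [Int.fdiv_eq_ediv_of_nonneg _ he0.le]
    have hb : ((k : ℤ) - (j : ℤ) - 0) = ((k : ℤ) - (j : ℤ) + (e : ℤ)) + (-1) * (e : ℤ) := by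
      ring
    rw [hb, Int.add_mul_ediv_right _ _ he0.ne']
    have h0 : (0 : ℤ) ≤ (k : ℤ) - (j : ℤ) + (e : ℤ) := by
      have := j.isLt; omega
    have hlt : (k : ℤ) - (j : ℤ) + (e : ℤ) < (e : ℤ) := by
      have : ((k : ℕ) : ℤ) < ((j : ℕ) : ℤ) := by exact_mod_cast hkj
      omega
    rw [Int.ediv_eq_zero_of_lt h0 hlt]; ring
  have hdiv_zero : ∀ j k : Fin e, ¬ ((k : ℕ) < (j : ℕ)) →
      Int.fdiv ((k : ℤ) - (j : ℤ) - 0) (e : ℤ) = 0 := by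
    intro j k hkj
    rw [Int.fdiv_eq_ediv_of_nonneg _ he0.le]
    have h0 : (0 : ℤ) ≤ (k : ℤ) - (j : ℤ) - 0 := by omega
    have hlt : (k : ℤ) - (j : ℤ) - 0 < (e : ℤ) := by
      have := k.isLt
      have hk : ((k : ℕ) : ℤ) < (e : ℤ) := by exact_mod_cast k.isLt
      omega
    exact Int.ediv_eq_zero_of_lt h0 hlt
  have base : stdHereditaryOrder R K t e = sSet R K t e 0 := by
    ext M
    constructor
    · intro hM j k
      have h1 := hM j k
      by_cases hkj : (k : ℕ) < (j : ℕ)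
      · rw [if_pos hkj] at h1
        obtain ⟨r, hr⟩ := h1
        rw [hdiv_neg j k hkj, Submodule.mem_span_singleton]
        refine ⟨r, ?_⟩
        simp only [neg_neg, zpow_one]
        rw [Algebra.smul_def, ← hr, map_mul]; ring
      · rw [if_neg hkj] at h1
        obtain ⟨r, hr⟩ := h1
        rw [hdiv_zero j k hkj, Submodule.mem_span_singleton]
        refine ⟨r, ?_⟩
        simp only [neg_zero, zpow_zero]
        rw [Algebra.smul_def, ← hr]; ring
    · intro hM j k
      have h1 := hM j k
      by_cases hkj : (k : ℕ) < (j : ℕ)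
      · rw [if_pos hkj]
        rw [hdiv_neg j k hkj, Submodule.mem_span_singleton] at h1
        obtain ⟨r, hr⟩ := h1
        refine ⟨r, ?_⟩
        simp only [neg_neg, zpow_one] at hr
        rw [← hr, Algebra.smul_def, map_mul]; ring
      · rw [if_neg hkj]
        rw [hdiv_zero j k hkj, Submodule.mem_span_singleton] at h1
        obtain ⟨r, hr⟩ := h1
        refine ⟨r, ?_⟩
        simp only [neg_zero, zpow_zero] at hr
        rw [← hr, Algebra.smul_def]; ring
  -- one step of the shift, at the level of sets
  have step : ∀ i : ℤ, (fun M => yMat R K t e * M) '' sSet R K t e i = sSet R K t e (i + 1) := by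
    intro i
    ext N
    constructor
    · rintro ⟨M, hM, rfl⟩
      exact (key i M).mp hM
    · intro hN
      refine ⟨z * N, ?_, ?_⟩
      · apply (key i _).mpr
        have hzN : yMat R K t e * (z * N) = N := by
          rw [← mul_assoc, hyz, one_mul]
        rw [hzN]; exact hN
      · show yMat R K t e * (z * N) = N
        rw [← mul_assoc, hyz, one_mul]
  have hinj : Function.Injective (fun M : Matrix (Fin e) (Fin e) K => yMat R K t e * M) := by
    intro A B h
    have h' : yMat R K t e * A = yMat R K t e * B := h
    rw [← hu] at h'
    calc A = ↑u⁻¹ * (↑u * A) := (u.inv_mul_cancel_left A).symm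
      _ = ↑u⁻¹ * (↑u * B) := by rw [h']
      _ = B := u.inv_mul_cancel_left B
  -- main induction
  have main : ∀ i : ℤ,
      (fun M => ((u ^ i : (Matrix (Fin e) (Fin e) K)ˣ) : Matrix (Fin e) (Fin e) K) * M) ''
        stdHereditaryOrder R K t e = sSet R K t e i := by
    intro i
    induction i using Int.induction_on with
    | zero =>
      simp only [zpow_zero, Units.val_one, one_mul]
      rw [Set.image_id']
      exact base
    | succ n ih =>
      have hfun : (fun M => ((u ^ ((n : ℤ) + 1) : (Matrix (Fin e) (Fin e) K)ˣ) :
              Matrix (Fin e) (Fin e) K) * M)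
          = (fun M => yMat R K t e * M) ∘
            (fun M => ((u ^ (n : ℤ) : (Matrix (Fin e) (Fin e) K)ˣ) :
              Matrix (Fin e) (Fin e) K) * M) := by
        funext M
        simp only [Function.comp_apply, ← mul_assoc]
        rw [← hu, ← Units.val_mul]
        congr 2
        rw [zpow_add_one]
        exact (((Commute.refl u).zpow_right (n : ℤ)).eq).symm
      rw [hfun, Set.image_comp, ih, step]
    | pred n ih =>
      have hfun : (fun M => ((u ^ (-(n : ℤ)) : (Matrix (Fin e) (Fin e) K)ˣ) :
              Matrix (Fin e) (Fin e) K) * M)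
          = (fun M => yMat R K t e * M) ∘
            (fun M => ((u ^ (-(n : ℤ) - 1) : (Matrix (Fin e) (Fin e) K)ˣ) :
              Matrix (Fin e) (Fin e) K) * M) := by
        funext M
        simp only [Function.comp_apply, ← mul_assoc]
        rw [← hu, ← Units.val_mul]
        congr 2
        rw [((Commute.refl u).zpow_right (-(n : ℤ) - 1)).eq, ← zpow_add_one]
        norm_num
      have e1 : (fun M => yMat R K t e * M) ''
            ((fun M => ((u ^ (-(n : ℤ) - 1) : (Matrix (Fin e) (Fin e) K)ˣ) :
              Matrix (Fin e) (Fin e) K) * M) '' stdHereditaryOrder R K t e)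
          = (fun M => yMat R K t e * M) '' sSet R K t e (-(n : ℤ) - 1) := by
        rw [← Set.image_comp, ← hfun, ih, step]
        norm_num
      exact Set.image_injective.mpr hinj e1
  exact main i
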